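/- arXiv:1812.02120 — 2 statements merged into one kernel-verified Lean document; each statement's English description precedes it below -/
import Mathlib

section
/- Let G : Ω × Ω → [0,∞) satisfy G(x,y) ≤ C₀|x-y|^{2s-n} with Ω ⊂ ℝⁿ bounded, n ≥ 3, 0 < s ≤ 1, and let G be symmetric. Then for any 0 < β < 2s/n there exists C > 0 such that for every measurable A ⊂ Ω and every f ∈ L¹(Ω), ∫_A |𝒢(f)| ≤ C |A|^β ‖f‖_{L¹(Ω)}, where 𝒢(f)(x) = ∫_Ω G(x,y) f(y) dy. -/
open MeasureTheory Metric Real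



open Set in
lemma aux_K_lt_top (n : ℕ) (D ρ : ℝ)
    (hρ0 : ρ < 0) (hρn : -(n : ℝ) < ρ) :
    (∫⁻ z in ball (0 : EuclideanSpace ℝ (Fin n)) D, ENNReal.ofReal (‖z‖ ^ ρ)) < ⊤ := by
  set E := EuclideanSpace ℝ (Fin n)
  set μ' := volume.restrict (ball (0 : E) D) with hμ'
  have hmeas : Measurable fun z : E => ‖z‖ ^ ρ := by fun_prop
  have hnn : (0 : E → ℝ) ≤ᵐ[μ'] fun z => ‖z‖ ^ ρ :=
    Filter.Eventually.of_forall fun z => Real.rpow_nonneg (norm_nonneg _) _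
  rw [show (∫⁻ z in ball (0 : E) D, ENNReal.ofReal (‖z‖ ^ ρ)) =
      ∫⁻ z, ENNReal.ofReal (‖z‖ ^ ρ) ∂μ' from rfl,
    lintegral_eq_lintegral_meas_le μ' hnn hmeas.aemeasurable]
  set V := volume (ball (0 : E) D) with hV
  have hVlt : V < ⊤ := measure_ball_lt_top
  set B1 := volume (ball (0 : E) 1) with hB1
  have hB1lt : B1 < ⊤ := measure_ball_lt_top
  set e := ρ⁻¹ * (n : ℝ) with he
  have hinv : ρ⁻¹ < 0 := inv_lt_zero.2 hρ0
  have hρne : ρ ≠ 0 := ne_of_lt hρ0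
  have he1 : e < -1 := by
    have h1 : ρ * ρ⁻¹ = 1 := mul_inv_cancel₀ hρne
    nlinarith [mul_neg_of_pos_of_neg (by linarith : (0:ℝ) < ρ + n) hinv]
  have hsplit : (Ioi (0:ℝ)) ⊆ Ioc (0:ℝ) 1 ∪ Ioi 1 := fun t ht => by
    rcases le_or_gt t 1 with h | h
    · exact Or.inl ⟨ht, h⟩
    · exact Or.inr h
  calc ∫⁻ t in Ioi (0:ℝ), μ' {a | t ≤ ‖a‖ ^ ρ}
      ≤ ∫⁻ t in (Ioc (0:ℝ) 1 ∪ Ioi 1), μ' {a | t ≤ ‖a‖ ^ ρ} := lintegral_mono_set hsplit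
    _ ≤ (∫⁻ t in Ioc (0:ℝ) 1, μ' {a | t ≤ ‖a‖ ^ ρ}) +
        ∫⁻ t in Ioi (1:ℝ), μ' {a | t ≤ ‖a‖ ^ ρ} := lintegral_union_le _ _ _
    _ < ⊤ := by
        apply ENNReal.add_lt_top.2
        constructor
        · calc (∫⁻ t in Ioc (0:ℝ) 1, μ' {a | t ≤ ‖a‖ ^ ρ})
              ≤ ∫⁻ _ in Ioc (0:ℝ) 1, V := by
                refine lintegral_mono fun t => ?_
                calc μ' {a | t ≤ ‖a‖ ^ ρ} ≤ μ' univ := measure_mono (subset_univ _)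
                  _ = V := by rw [hμ', Measure.restrict_apply_univ]
            _ = V * volume (Ioc (0:ℝ) 1) := setLIntegral_const _ _
            _ < ⊤ := ENNReal.mul_lt_top hVlt (by simp [Real.volume_Ioc])
        · have hb : ∀ t ∈ Ioi (1:ℝ),
              μ' {a | t ≤ ‖a‖ ^ ρ} ≤ ENNReal.ofReal (t ^ e) * B1 := by
            intro t ht
            have ht0 : (0:ℝ) < t := lt_trans one_pos ht
            have hsub : {a : E | t ≤ ‖a‖ ^ ρ} ⊆ closedBall 0 (t ^ ρ⁻¹) := by
              intro z hz
              simp only [mem_setOf_eq] at hz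
              have hz0 : 0 < ‖z‖ := by
                rcases eq_or_lt_of_le (norm_nonneg z) with h | h
                · exfalso
                  rw [← h, Real.zero_rpow hρne] at hz
                  linarith
                · exact h
              rw [mem_closedBall, dist_zero_right]
              exact (Real.le_rpow_inv_iff_of_neg hz0 ht0 hρ0).2 hz
            calc μ' {a : E | t ≤ ‖a‖ ^ ρ} ≤ volume {a : E | t ≤ ‖a‖ ^ ρ} :=
                  Measure.restrict_le_self _
              _ ≤ volume (closedBall (0:E) (t ^ ρ⁻¹)) := measure_mono hsub
              _ = ENNReal.ofReal ((t ^ ρ⁻¹) ^ Module.finrank ℝ E) * B1 :=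
                  Measure.addHaar_closedBall _ _ (Real.rpow_nonneg ht0.le _)
              _ = ENNReal.ofReal (t ^ e) * B1 := by
                  congr 2
                  rw [show Module.finrank ℝ E = n from finrank_euclideanSpace_fin,
                    ← Real.rpow_natCast (t ^ ρ⁻¹) n, ← Real.rpow_mul ht0.le, he]
          calc (∫⁻ t in Ioi (1:ℝ), μ' {a | t ≤ ‖a‖ ^ ρ})
              ≤ ∫⁻ t in Ioi (1:ℝ), ENNReal.ofReal (t ^ e) * B1 := by
                refine lintegral_mono_ae ?_
                filter_upwards [ae_restrict_mem measurableSet_Ioi] with t ht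
                exact hb t ht
            _ = (∫⁻ t in Ioi (1:ℝ), ENNReal.ofReal (t ^ e)) * B1 :=
                lintegral_mul_const' _ _ hB1lt.ne
            _ < ⊤ := ENNReal.mul_lt_top
                ((integrableOn_Ioi_rpow_of_lt he1 one_pos).setLIntegral_lt_top) hB1lt

/-- Dunford–Pettis type estimate: for a symmetric nonnegative kernel
`G(x,y) ≤ C₀|x-y|^{2s-n}` on a bounded `Ω ⊆ ℝⁿ` and any `0 < β < 2s/n`, there is
`C > 0` with `∫_A |𝒢(f)| ≤ C |A|^β ‖f‖_{L¹}` for all measurable `A ⊆ Ω`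
and `f ∈ L¹(Ω)`. -/
theorem stmt3 (n : ℕ) (hn : 3 ≤ n) (s C₀ β : ℝ) (hs0 : 0 < s) (hs1 : s ≤ 1)
    (hβ0 : 0 < β) (hβ : β < 2 * s / n)
    (Ω : Set (EuclideanSpace ℝ (Fin n))) (hΩo : IsOpen Ω)
    (hΩb : Bornology.IsBounded Ω)
    (G : EuclideanSpace ℝ (Fin n) → EuclideanSpace ℝ (Fin n) → ℝ)
    (hGmeas : Measurable (Function.uncurry G))
    (hGpos : ∀ x y, 0 ≤ G x y)
    (hGsymm : ∀ x y, G x y = G y x)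
    (hGbd : ∀ x ∈ Ω, ∀ y ∈ Ω, G x y ≤ C₀ * ‖x - y‖ ^ (2 * s - (n : ℝ))) :
    ∃ C : ℝ, 0 < C ∧ ∀ A : Set (EuclideanSpace ℝ (Fin n)), MeasurableSet A → A ⊆ Ω →
      ∀ f : EuclideanSpace ℝ (Fin n) → ℝ, IntegrableOn f Ω volume →
        (∫ x in A, |∫ y in Ω, G x y * f y|) ≤
          C * (volume A).toReal ^ β * ∫ x in Ω, |f x| := by
  classical
  have hn0 : (0:ℝ) < n := by
    have : (3:ℝ) ≤ n := by exact_mod_cast hn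
    linarith
  have hn3 : (3:ℝ) ≤ n := by exact_mod_cast hn
  have hβ1 : β < 1 := hβ.trans ((div_lt_one hn0).mpr (by linarith))
  set q : ℝ := (1 - β)⁻¹ with hqdef
  have h1β : (0:ℝ) < 1 - β := by linarith
  have hq0 : 0 < q := inv_pos.mpr h1β
  have hpq : (β⁻¹).HolderConjugate q := by
    rw [Real.holderConjugate_iff]
    constructor
    · exact (one_lt_inv₀ hβ0).2 hβ1
    · rw [inv_inv, hqdef, inv_inv]; ring
  set a : ℝ := 2 * s - n with hadef
  have ha0 : a < 0 := by rw [hadef]; linarith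
  set ρ : ℝ := a * q with hρdef
  have hρ0 : ρ < 0 := mul_neg_of_neg_of_pos ha0 hq0
  have h2s : β * n < 2 * s := (lt_div_iff₀ hn0).mp hβ
  have hρn : -(n:ℝ) < ρ := by
    have h1 : (1 - β) * q = 1 := mul_inv_cancel₀ (ne_of_gt h1β)
    have key : -(n:ℝ) * (1 - β) < a := by rw [hadef]; nlinarith
    calc (-(n:ℝ)) = (-(n:ℝ) * (1 - β)) * q := by rw [mul_assoc, h1, mul_one]
      _ < a * q := mul_lt_mul_of_pos_right key hq0
  -- geometry
  obtain ⟨R, hR⟩ := hΩb.subset_closedBall 0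
  set D : ℝ := 2 * max R 0 + 1 with hDdef
  have hD0 : 0 < D := by positivity
  have hΩD : ∀ y ∈ Ω, Ω ⊆ ball y D := by
    intro y hy x hx
    have hx' : dist x 0 ≤ R := hR hx
    have hy' : dist y 0 ≤ R := hR hy
    have ht : dist x y ≤ dist x 0 + dist 0 y := dist_triangle _ _ _
    have h0y : dist 0 y = dist y 0 := dist_comm _ _
    have hRm : R ≤ max R 0 := le_max_left _ _
    rw [mem_ball]
    rw [hDdef]
    linarith
  -- the key kernel constant
  set K : ENNReal := ∫⁻ z in ball (0 : EuclideanSpace ℝ (Fin n)) D, ENNReal.ofReal (‖z‖ ^ ρ) with hKdef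
  have hKlt : K < ⊤ := aux_K_lt_top n D ρ hρ0 hρn
  set Kr : ℝ := K.toReal with hKrdef
  have hKr0 : 0 ≤ Kr ^ (1 - β) := Real.rpow_nonneg ENNReal.toReal_nonneg _
  set C₁ : ℝ := max C₀ 0 + 1 with hC₁def
  have hC₁0 : 0 < C₁ := by positivity
  have hΩmeas : MeasurableSet Ω := hΩo.measurableSet
  have hΩlt : volume Ω < ⊤ := hΩb.measure_lt_top
  refine ⟨C₁ * (Kr ^ (1 - β) + 1), by positivity, ?_⟩
  -- reduce to strongly measurable f
  suffices key : ∀ A : Set (EuclideanSpace ℝ (Fin n)), MeasurableSet A → A ⊆ Ω →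
      ∀ f : EuclideanSpace ℝ (Fin n) → ℝ, StronglyMeasurable f → IntegrableOn f Ω volume →
        (∫ x in A, |∫ y in Ω, G x y * f y|) ≤
          (C₁ * (Kr ^ (1 - β) + 1)) * (volume A).toReal ^ β * ∫ x in Ω, |f x| by
    intro A hA hAΩ f hf
    set f₀ := hf.aestronglyMeasurable.mk f with hf₀def
    have hff₀ : f =ᵐ[volume.restrict Ω] f₀ := hf.aestronglyMeasurable.ae_eq_mk
    have hsm : StronglyMeasurable f₀ := hf.aestronglyMeasurable.stronglyMeasurable_mk
    have h1 : ∀ x, (∫ y in Ω, G x y * f y) = ∫ y in Ω, G x y * f₀ y := fun x =>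
      integral_congr_ae (hff₀.mono fun y hy => by simp only [hy])
    have h2 : (∫ x in Ω, |f x|) = ∫ x in Ω, |f₀ x| :=
      integral_congr_ae (hff₀.mono fun y hy => by simp only [hy])
    simp_rw [h1, h2]
    exact key A hA hAΩ f₀ hsm (hf.congr hff₀)
  intro A hA hAΩ f hfm hf
  have hfmeas : Measurable f := hfm.measurable
  set F : ℝ := ∫ x in Ω, |f x| with hFdef
  have hF0 : 0 ≤ F := integral_nonneg fun x => abs_nonneg _
  have hμA : volume A ≠ ⊤ := ((measure_mono hAΩ).trans_lt hΩlt).ne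
  -- measurability of the inner integral
  have hGxmeas : ∀ x : EuclideanSpace ℝ (Fin n), Measurable fun y => G x y := fun x =>
    hGmeas.comp measurable_prodMk_left
  have hgm : StronglyMeasurable fun x => ∫ y in Ω, G x y * f y := by
    apply MeasureTheory.StronglyMeasurable.integral_prod_right'
      (f := fun p : EuclideanSpace ℝ (Fin n) × EuclideanSpace ℝ (Fin n) => G p.1 p.2 * f p.2)
    exact (hGmeas.mul (hfmeas.comp measurable_snd)).stronglyMeasurable
  have habs : Measurable fun x : ℝ => |x| := measurable_abs
  set L : ENNReal := ∫⁻ x in A, ENNReal.ofReal |∫ y in Ω, G x y * f y| with hLdef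
  have hLHS : (∫ x in A, |∫ y in Ω, G x y * f y|) = L.toReal :=
    integral_eq_lintegral_of_nonneg_ae (Filter.Eventually.of_forall fun x => abs_nonneg _)
      (habs.comp hgm.measurable).aestronglyMeasurable
  have hstep2 : L ≤ ∫⁻ x in A, ∫⁻ y in Ω, ENNReal.ofReal (G x y) * ENNReal.ofReal |f y| := by
    refine lintegral_mono fun x => ?_
    have h1 : |∫ y in Ω, G x y * f y| ≤ ∫ y in Ω, |G x y * f y| := by
      simpa only [Real.norm_eq_abs] using
        norm_integral_le_integral_norm (μ := volume.restrict Ω) (fun y => G x y * f y)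
    have h2 : (∫ y in Ω, |G x y * f y|) = (∫⁻ y in Ω, ENNReal.ofReal |G x y * f y|).toReal :=
      integral_eq_lintegral_of_nonneg_ae (Filter.Eventually.of_forall fun y => abs_nonneg _)
        (habs.comp ((hGxmeas x).mul hfmeas)).aestronglyMeasurable
    calc ENNReal.ofReal |∫ y in Ω, G x y * f y|
        ≤ ENNReal.ofReal (∫ y in Ω, |G x y * f y|) := ENNReal.ofReal_le_ofReal h1
      _ ≤ ∫⁻ y in Ω, ENNReal.ofReal |G x y * f y| := by
          rw [h2]; exact ENNReal.ofReal_toReal_le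
      _ = ∫⁻ y in Ω, ENNReal.ofReal (G x y) * ENNReal.ofReal |f y| := by
          refine lintegral_congr fun y => ?_
          rw [abs_mul, abs_of_nonneg (hGpos x y), ENNReal.ofReal_mul (hGpos x y)]
  have hswap : (∫⁻ x in A, ∫⁻ y in Ω, ENNReal.ofReal (G x y) * ENNReal.ofReal |f y|) =
      ∫⁻ y in Ω, ∫⁻ x in A, ENNReal.ofReal (G x y) * ENNReal.ofReal |f y| := by
    refine lintegral_lintegral_swap ?_
    exact (hGmeas.ennreal_ofReal.mul
      ((habs.comp (hfmeas.comp measurable_snd)).ennreal_ofReal)).aemeasurable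
  have h1q : 1 / q = 1 - β := by rw [hqdef, one_div, inv_inv]
  have hHold : ∀ y ∈ Ω, (∫⁻ x in A, ENNReal.ofReal (G x y)) ≤
      ENNReal.ofReal C₁ * ((volume A) ^ β * K ^ (1 - β)) := by
    intro y hy
    have hmg : Measurable fun x : EuclideanSpace ℝ (Fin n) =>
        ENNReal.ofReal (‖x - y‖ ^ a) := by fun_prop
    have hH := ENNReal.lintegral_mul_le_Lp_mul_Lq (volume.restrict A) hpq
        (aemeasurable_const (b := (1 : ENNReal))) hmg.aemeasurable
    simp only [Pi.mul_apply, one_mul, ENNReal.one_rpow, lintegral_one,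
      Measure.restrict_apply_univ, one_div, inv_inv] at hH
    have e3 : (∫⁻ x in A, (ENNReal.ofReal (‖x - y‖ ^ a)) ^ q) =
        ∫⁻ x in A, ENNReal.ofReal (‖x - y‖ ^ ρ) := by
      refine lintegral_congr fun x => ?_
      rw [ENNReal.ofReal_rpow_of_nonneg (Real.rpow_nonneg (norm_nonneg _) _) hq0.le,
        hρdef, Real.rpow_mul (norm_nonneg _)]
    have e4 : (∫⁻ x in A, ENNReal.ofReal (‖x - y‖ ^ ρ)) ≤ K := by
      calc (∫⁻ x in A, ENNReal.ofReal (‖x - y‖ ^ ρ))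
          ≤ ∫⁻ x in ball y D, ENNReal.ofReal (‖x - y‖ ^ ρ) :=
            lintegral_mono_set (hAΩ.trans (hΩD y hy))
        _ = K := by
            have hpre : (fun x : EuclideanSpace ℝ (Fin n) => x - y) ⁻¹' (ball 0 D)
                = ball y D := by
              ext x
              simp [mem_ball, dist_eq_norm]
            rw [hKdef, ← hpre,
              (measurePreserving_sub_right volume y).setLIntegral_comp_preimage_emb
                (MeasurableEquiv.subRight y).measurableEmbedding
                (fun z => ENNReal.ofReal (‖z‖ ^ ρ))]
    calc ∫⁻ x in A, ENNReal.ofReal (G x y)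
        ≤ ∫⁻ x in A, ENNReal.ofReal (C₁ * ‖x - y‖ ^ a) := by
          refine lintegral_mono_ae ?_
          filter_upwards [ae_restrict_mem hA] with x hx
          refine ENNReal.ofReal_le_ofReal ((hGbd x (hAΩ hx) y hy).trans ?_)
          have hc : C₀ ≤ C₁ := by
            rw [hC₁def]
            have := le_max_left C₀ (0:ℝ)
            linarith
          exact mul_le_mul_of_nonneg_right hc (Real.rpow_nonneg (norm_nonneg _) _)
      _ = ENNReal.ofReal C₁ * ∫⁻ x in A, ENNReal.ofReal (‖x - y‖ ^ a) := by
          simp_rw [ENNReal.ofReal_mul hC₁0.le]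
          rw [lintegral_const_mul' _ _ ENNReal.ofReal_ne_top]
      _ ≤ ENNReal.ofReal C₁ * ((volume A) ^ β * K ^ (1 - β)) := by
          refine mul_le_mul_right (hH.trans ?_) _
          rw [e3]
          have h1q' : q⁻¹ = 1 - β := by rw [hqdef, inv_inv]
          rw [← h1q']
          exact mul_le_mul_right (ENNReal.rpow_le_rpow e4 (inv_nonneg.mpr hq0.le)) _
  have hMne : ENNReal.ofReal C₁ * ((volume A) ^ β * K ^ (1 - β)) ≠ ⊤ := by
    apply ENNReal.mul_ne_top ENNReal.ofReal_ne_top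
    apply ENNReal.mul_ne_top
    · exact (ENNReal.rpow_lt_top_of_nonneg hβ0.le hμA).ne
    · exact (ENNReal.rpow_lt_top_of_nonneg (by linarith) hKlt.ne).ne
  have htot : L ≤ (ENNReal.ofReal C₁ * ((volume A) ^ β * K ^ (1 - β))) * ENNReal.ofReal F := by
    calc L ≤ ∫⁻ x in A, ∫⁻ y in Ω, ENNReal.ofReal (G x y) * ENNReal.ofReal |f y| := hstep2
      _ = ∫⁻ y in Ω, ∫⁻ x in A, ENNReal.ofReal (G x y) * ENNReal.ofReal |f y| := hswap
      _ = ∫⁻ y in Ω, (∫⁻ x in A, ENNReal.ofReal (G x y)) * ENNReal.ofReal |f y| := by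
          refine lintegral_congr fun y => ?_
          exact lintegral_mul_const' _ _ ENNReal.ofReal_ne_top
      _ ≤ ∫⁻ y in Ω, (ENNReal.ofReal C₁ * ((volume A) ^ β * K ^ (1 - β))) *
            ENNReal.ofReal |f y| := by
          refine lintegral_mono_ae ?_
          filter_upwards [ae_restrict_mem hΩmeas] with y hy
          exact mul_le_mul_left (hHold y hy) _
      _ = (ENNReal.ofReal C₁ * ((volume A) ^ β * K ^ (1 - β))) *
            ∫⁻ y in Ω, ENNReal.ofReal |f y| := lintegral_const_mul' _ _ hMne
      _ = (ENNReal.ofReal C₁ * ((volume A) ^ β * K ^ (1 - β))) * ENNReal.ofReal F := by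
          congr 1
          exact (ofReal_integral_eq_lintegral_ofReal hf.abs
            (Filter.Eventually.of_forall fun y => abs_nonneg _)).symm
  rw [hLHS]
  have hfin : (ENNReal.ofReal C₁ * ((volume A) ^ β * K ^ (1 - β))) * ENNReal.ofReal F ≠ ⊤ :=
    ENNReal.mul_ne_top hMne ENNReal.ofReal_ne_top
  refine le_trans (ENNReal.toReal_mono hfin htot) ?_
  rw [ENNReal.toReal_mul, ENNReal.toReal_mul, ENNReal.toReal_mul,
    ENNReal.toReal_ofReal hC₁0.le, ENNReal.toReal_ofReal hF0,
    ← ENNReal.toReal_rpow, ← ENNReal.toReal_rpow, ← hKrdef]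
  have hA0 : 0 ≤ (volume A).toReal ^ β := Real.rpow_nonneg ENNReal.toReal_nonneg _
  nlinarith [mul_nonneg (mul_nonneg hC₁0.le hA0) hF0]
end

section
/- Let Ω ⊂ ℝⁿ be bounded, V ∈ L^∞(Ω) with V ≥ 0, and let 𝒢 : L²(Ω) → L²(Ω) be a bounded linear operator satisfying ∫_Ω f 𝒢(f) ≥ 0 for all f ∈ L²(Ω), such that additionally 𝒢 maps L¹(Ω) into L^q(Ω) for some q > 1 continuously. Then there exists at most one u ∈ L¹(Ω) with Vu ∈ L¹(Ω) and u = 𝒢(f - Vu) for given f ∈ L¹(Ω). -/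
open MeasureTheory Metric Set Filter
open scoped ENNReal NNReal

theorem ofReal_norm_eq_coe_nnnorm {E : Type*} [SeminormedAddGroup E] (a : E) :
    ENNReal.ofReal ‖a‖ = (‖a‖₊ : ℝ≥0∞) :=
  (ofReal_norm a).trans (enorm_eq_nnnorm a)

namespace Stmt13Aux

variable {α : Type*} [MeasurableSpace α]

noncomputable def Phi (μ : Measure α) (V w : α → ℝ) (t : ℝ) : ℝ≥0∞ :=
  ∫⁻ x, ({y | |w y| ≤ t}.indicator fun y => ENNReal.ofReal (V y * w y ^ 2)) x ∂μ

noncomputable def Psi (μ : Measure α) (V w : α → ℝ) (t : ℝ) : ℝ≥0∞ :=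
  ∫⁻ x, ({y | t < |w y|}.indicator fun y => ENNReal.ofReal (V y * |w y|)) x ∂μ

lemma dyadic {t s : ℝ} (ht : 0 < t) (hts : t < s) :
    ∃ m : ℕ, 2 ^ m * t < s ∧ s ≤ 2 ^ (m + 1) * t := by
  have hex : ∃ k : ℕ, s ≤ 2 ^ (k + 1) * t := by
    obtain ⟨k, hk⟩ := pow_unbounded_of_one_lt (s / t) (by norm_num : (1:ℝ) < 2)
    refine ⟨k, ?_⟩
    have h1 : s < 2 ^ k * t := by
      have := (div_lt_iff₀ ht).mp hk
      linarith
    have h2 : (2:ℝ) ^ k * t ≤ 2 ^ (k+1) * t := by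
      have : (2:ℝ) ^ k ≤ 2 ^ (k+1) := by
        apply pow_le_pow_right₀ (by norm_num) (by omega)
      nlinarith
    linarith
  classical
  let m := Nat.find hex
  refine ⟨m, ?_, Nat.find_spec hex⟩
  rcases Nat.eq_zero_or_pos m with hm | hm
  · simpa [hm] using hts
  · obtain ⟨j, hj⟩ := Nat.exists_eq_add_of_lt hm
    have hlt : ¬ (s ≤ 2 ^ (j + 1) * t) := Nat.find_min hex (by omega)
    have : m = j + 1 := by omega
    rw [this]
    push_neg at hlt
    exact hlt

lemma psi_le (μ : Measure α) (V w : α → ℝ) (hV : Measurable V) (hw : Measurable w)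
    (hV0 : ∀ x, 0 ≤ V x) {A : ℝ≥0∞} {β : ℝ} (hβ : β < 1)
    (h : ∀ t : ℝ, 1 ≤ t → Phi μ V w t ≤ A * ENNReal.ofReal t ^ β) :
    ∀ t : ℝ, 1 ≤ t →
      Psi μ V w t ≤ A * ((2:ℝ≥0∞) ^ β * (1 - (2:ℝ≥0∞) ^ (β - 1))⁻¹) *
        ENNReal.ofReal t ^ (β - 1) := by
  intro t ht
  have ht0 : (0:ℝ) < t := lt_of_lt_of_le one_pos ht
  set T : ℝ≥0∞ := ENNReal.ofReal t with hT
  have hT0 : T ≠ 0 := by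
    simp [hT, ENNReal.ofReal_eq_zero]; linarith
  have hTtop : T ≠ ∞ := ENNReal.ofReal_ne_top
  set Sh : ℕ → Set α := fun m => {y | 2 ^ m * t < |w y| ∧ |w y| ≤ 2 ^ (m + 1) * t} with hSh
  have hShMeas : ∀ m, MeasurableSet (Sh m) := by
    intro m
    exact (measurableSet_lt measurable_const hw.abs).inter
      (measurableSet_le hw.abs measurable_const)
  set F : ℕ → α → ℝ≥0∞ := fun m =>
    (Sh m).indicator fun y =>
      (ENNReal.ofReal (2 ^ m * t))⁻¹ * ENNReal.ofReal (V y * w y ^ 2) with hF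
  have hpt : ∀ x, ({y | t < |w y|}.indicator fun y => ENNReal.ofReal (V y * |w y|)) x
      ≤ ∑' m, F m x := by
    intro x
    by_cases hx : t < |w x|
    · obtain ⟨m, hm1, hm2⟩ := dyadic ht0 hx
      refine le_trans ?_ (ENNReal.le_tsum m)
      have hxSh : x ∈ Sh m := ⟨hm1, hm2⟩
      rw [Set.indicator_of_mem (by exact hx : x ∈ {y | t < |w y|})]
      simp only [hF]
      rw [Set.indicator_of_mem hxSh]
      have hc0 : ENNReal.ofReal (2 ^ m * t) ≠ 0 := by
        rw [Ne, ENNReal.ofReal_eq_zero, not_le]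
        positivity
      rw [← ENNReal.div_eq_inv_mul]
      rw [ENNReal.le_div_iff_mul_le (Or.inl hc0) (Or.inl ENNReal.ofReal_ne_top)]
      rw [← ENNReal.ofReal_mul (mul_nonneg (hV0 x) (abs_nonneg _))]
      apply ENNReal.ofReal_le_ofReal
      have : V x * |w x| * (2 ^ m * t) ≤ V x * |w x| * |w x| := by
        apply mul_le_mul_of_nonneg_left hm1.le (mul_nonneg (hV0 x) (abs_nonneg _))
      calc V x * |w x| * (2 ^ m * t) ≤ V x * |w x| * |w x| := this
        _ = V x * w x ^ 2 := by rw [mul_assoc, ← abs_mul, abs_mul_self]; ring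
    · rw [Set.indicator_of_notMem (by exact hx : x ∉ {y | t < |w y|})]
      exact zero_le
  have hFmeas : ∀ m, Measurable (F m) := by
    intro m
    exact Measurable.indicator (by fun_prop) (hShMeas m)
  have step1 : Psi μ V w t ≤ ∑' m, ∫⁻ x, F m x ∂μ := by
    rw [Psi, ← lintegral_tsum fun m => (hFmeas m).aemeasurable]
    exact lintegral_mono hpt
  have step2 : ∀ m, ∫⁻ x, F m x ∂μ ≤
      (ENNReal.ofReal (2 ^ m * t))⁻¹ * (A * ENNReal.ofReal (2 ^ (m+1) * t) ^ β) := by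
    intro m
    have : ∫⁻ x, F m x ∂μ = (ENNReal.ofReal (2 ^ m * t))⁻¹ *
        ∫⁻ x, ((Sh m).indicator fun y => ENNReal.ofReal (V y * w y ^ 2)) x ∂μ := by
      rw [← lintegral_const_mul _ (Measurable.indicator (by fun_prop) (hShMeas m))]
      congr 1
      funext x
      by_cases hx : x ∈ Sh m
      · simp only [hF]
        rw [Set.indicator_of_mem hx, Set.indicator_of_mem hx]
      · simp only [hF]
        rw [Set.indicator_of_notMem hx, Set.indicator_of_notMem hx, mul_zero]
    rw [this]
    apply mul_le_mul_right
    refine le_trans ?_ (h (2 ^ (m+1) * t) ?_)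
    · rw [Phi]
      apply lintegral_mono
      apply Set.indicator_le_indicator_of_subset
      · intro y hy
        exact hy.2
      · intro y; exact zero_le
    · have h1 : (1:ℝ) ≤ 2 ^ (m+1) := one_le_pow₀ (by norm_num)
      nlinarith
  have hterm : ∀ m : ℕ, (ENNReal.ofReal (2 ^ m * t))⁻¹ *
      (A * ENNReal.ofReal (2 ^ (m+1) * t) ^ β)
      = (A * (2:ℝ≥0∞) ^ β * T ^ (β - 1)) * ((2:ℝ≥0∞) ^ (β - 1)) ^ m := by
    intro m
    have e2 : (ENNReal.ofReal ((2:ℝ) ^ m)) = (2:ℝ≥0∞) ^ m := by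
      rw [ENNReal.ofReal_pow (by norm_num)]
      norm_num
    have e1 : ENNReal.ofReal (2 ^ m * t) = (2:ℝ≥0∞) ^ m * T := by
      rw [ENNReal.ofReal_mul (by positivity), e2]
    have e1' : ENNReal.ofReal (2 ^ (m+1) * t) = (2:ℝ≥0∞) ^ (m+1) * T := by
      rw [ENNReal.ofReal_mul (by positivity), ENNReal.ofReal_pow (by norm_num)]
      norm_num; rfl
    rw [e1, e1']
    have h2m0 : ((2:ℝ≥0∞) ^ m) ≠ 0 := by positivity
    have h2mtop : ((2:ℝ≥0∞) ^ m) ≠ ∞ := ENNReal.pow_ne_top (by norm_num)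
    have h2m1top : ((2:ℝ≥0∞) ^ (m+1)) ≠ ∞ := ENNReal.pow_ne_top (by norm_num)
    rw [ENNReal.mul_rpow_of_ne_top h2m1top hTtop]
    rw [ENNReal.mul_inv (Or.inl h2m0) (Or.inl h2mtop)]
    have p1 : ((2:ℝ≥0∞) ^ (m+1)) ^ β = (2:ℝ≥0∞) ^ (((m:ℝ)+1) * β) := by
      rw [← ENNReal.rpow_natCast (2:ℝ≥0∞) (m+1), ← ENNReal.rpow_mul]
      push_cast
      ring_nf
    have p2 : ((2:ℝ≥0∞) ^ m)⁻¹ = (2:ℝ≥0∞) ^ (-(m:ℝ)) := by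
      rw [← ENNReal.rpow_natCast (2:ℝ≥0∞) m, ← ENNReal.rpow_neg]
    have p3 : T⁻¹ * T ^ β = T ^ (β - 1) := by
      rw [← ENNReal.rpow_neg_one T, ← ENNReal.rpow_add _ _ hT0 hTtop]
      ring_nf
    have p4 : ((2:ℝ≥0∞) ^ (β - 1)) ^ m = (2:ℝ≥0∞) ^ ((β - 1) * m) := by
      rw [← ENNReal.rpow_natCast ((2:ℝ≥0∞) ^ (β-1)) m, ← ENNReal.rpow_mul]
    have p5 : (2:ℝ≥0∞) ^ (-(m:ℝ)) * (2:ℝ≥0∞) ^ (((m:ℝ)+1) * β)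
        = (2:ℝ≥0∞) ^ β * (2:ℝ≥0∞) ^ ((β - 1) * m) := by
      rw [← ENNReal.rpow_add _ _ (by norm_num) (by norm_num),
        ← ENNReal.rpow_add _ _ (by norm_num) (by norm_num)]
      ring_nf
    calc ((2:ℝ≥0∞) ^ m)⁻¹ * T⁻¹ * (A * (((2:ℝ≥0∞) ^ (m+1)) ^ β * T ^ β))
        = A * (((2:ℝ≥0∞) ^ m)⁻¹ * ((2:ℝ≥0∞) ^ (m+1)) ^ β) * (T⁻¹ * T ^ β) := by ring
      _ = A * ((2:ℝ≥0∞) ^ β * (2:ℝ≥0∞) ^ ((β - 1) * m)) * T ^ (β - 1) := by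
          rw [p1, p2, p3, p5]
      _ = (A * (2:ℝ≥0∞) ^ β * T ^ (β - 1)) * ((2:ℝ≥0∞) ^ (β - 1)) ^ m := by
          rw [p4]; ring
  have hsum : ∑' m, (ENNReal.ofReal (2 ^ m * t))⁻¹ *
      (A * ENNReal.ofReal (2 ^ (m+1) * t) ^ β)
      = (A * (2:ℝ≥0∞) ^ β * T ^ (β - 1)) * (1 - (2:ℝ≥0∞) ^ (β - 1))⁻¹ := by
    rw [tsum_congr hterm, ENNReal.tsum_mul_left, ENNReal.tsum_geometric]
  calc Psi μ V w t ≤ ∑' m, ∫⁻ x, F m x ∂μ := step1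
    _ ≤ ∑' m, (ENNReal.ofReal (2 ^ m * t))⁻¹ *
        (A * ENNReal.ofReal (2 ^ (m+1) * t) ^ β) := ENNReal.tsum_le_tsum step2
    _ = (A * (2:ℝ≥0∞) ^ β * T ^ (β - 1)) * (1 - (2:ℝ≥0∞) ^ (β - 1))⁻¹ := hsum
    _ = A * ((2:ℝ≥0∞) ^ β * (1 - (2:ℝ≥0∞) ^ (β - 1))⁻¹) * T ^ (β - 1) := by ring

end Stmt13Aux

open Stmt13Aux

/-- Uniqueness for bounded potential: if the linear operator `𝒢` has a nonnegative
quadratic form (`∫ f 𝒢(f) ≥ 0` on `L²`) and maps `L¹(Ω)` continuously into `L^q(Ω)`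
for some `q > 1`, and `0 ≤ V ∈ L^∞(Ω)`, then for any `f ∈ L¹(Ω)` there is at most one
`u ∈ L¹(Ω)` with `Vu ∈ L¹(Ω)` and `u = 𝒢(f - Vu)`. -/
theorem stmt13 (n : ℕ) (Ω : Set (EuclideanSpace ℝ (Fin n))) (hΩo : IsOpen Ω)
    (hΩb : Bornology.IsBounded Ω)
    (𝒢 : (EuclideanSpace ℝ (Fin n) → ℝ) → (EuclideanSpace ℝ (Fin n) → ℝ))
    (hadd : ∀ f g, 𝒢 (f + g) = 𝒢 f + 𝒢 g)
    (hsmul : ∀ (c : ℝ) f, 𝒢 (c • f) = c • 𝒢 f)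
    (hcoerc : ∀ f, MemLp f 2 (volume.restrict Ω) →
      0 ≤ ∫ x, f x * 𝒢 f x ∂(volume.restrict Ω))
    (hreg : ∃ q : ℝ, 1 < q ∧ ∃ C : ℝ, 0 < C ∧ ∀ f,
      Integrable f (volume.restrict Ω) →
        MemLp (𝒢 f) (ENNReal.ofReal q) (volume.restrict Ω) ∧
        eLpNorm (𝒢 f) (ENNReal.ofReal q) (volume.restrict Ω) ≤
          ENNReal.ofReal C * eLpNorm f 1 (volume.restrict Ω))
    (V : EuclideanSpace ℝ (Fin n) → ℝ) (hVmeas : Measurable V)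
    (hV0 : ∀ x, 0 ≤ V x) (hVbd : ∃ M : ℝ, ∀ x, V x ≤ M)
    (f : EuclideanSpace ℝ (Fin n) → ℝ) (hf : Integrable f (volume.restrict Ω)) :
    ∀ u₁ u₂ : EuclideanSpace ℝ (Fin n) → ℝ,
      Integrable u₁ (volume.restrict Ω) →
      Integrable (fun x => V x * u₁ x) (volume.restrict Ω) →
      u₁ =ᵐ[volume.restrict Ω] 𝒢 (fun x => f x - V x * u₁ x) →
      Integrable u₂ (volume.restrict Ω) →
      Integrable (fun x => V x * u₂ x) (volume.restrict Ω) →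
      u₂ =ᵐ[volume.restrict Ω] 𝒢 (fun x => f x - V x * u₂ x) →
      u₁ =ᵐ[volume.restrict Ω] u₂ := by
  obtain ⟨q, hq1, C, hC, hreg⟩ := hreg
  intro u₁ u₂ hu1 hVu1 heq1 hu2 hVu2 heq2
  set μ : Measure (EuclideanSpace ℝ (Fin n)) := volume.restrict Ω with hμdef
  obtain ⟨M, hM⟩ := hVbd
  have hM0 : 0 ≤ M := le_trans (hV0 0) (hM 0)
  have hq0 : (0:ℝ) < q := lt_trans one_pos hq1
  set q' : ℝ := q / (q - 1) with hq'def
  have hconj : q'.HolderConjugate q := (Real.HolderConjugate.conjExponent hq1).symm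
  have hq'1 : 1 < q' := hconj.lt
  haveI : IsFiniteMeasure μ := by
    constructor
    rw [hμdef, Measure.restrict_apply_univ]
    exact hΩb.measure_lt_top
  -- the difference and its measurable representative
  set w : EuclideanSpace ℝ (Fin n) → ℝ := fun x => u₁ x - u₂ x with hwdef
  have hw : Integrable w μ := hu1.sub hu2
  have hwae : AEMeasurable w μ := hw.aemeasurable
  set w' : EuclideanSpace ℝ (Fin n) → ℝ := hwae.mk w with hw'def
  have hw'meas : Measurable w' := hwae.measurable_mk
  have hww' : w =ᵐ[μ] w' := hwae.ae_eq_mk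
  have hw'int : Integrable w' μ := hw.congr hww'
  set g' : EuclideanSpace ℝ (Fin n) → ℝ := fun x => V x * w' x with hg'def
  have hg'meas : Measurable g' := hVmeas.mul hw'meas
  have hg'ae : (fun x => V x * u₁ x - V x * u₂ x) =ᵐ[μ] g' := by
    filter_upwards [hww'] with x hx
    simp only [hg'def, ← hx, hwdef]
    ring
  have hg'int : Integrable g' μ := (hVu1.sub hVu2).congr hg'ae
  -- 𝒢 kills a.e. zero integrable functions
  have hofq0 : (ENNReal.ofReal q) ≠ 0 := by
    rw [Ne, ENNReal.ofReal_eq_zero, not_le]; exact hq0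
  have hkill : ∀ h : EuclideanSpace ℝ (Fin n) → ℝ, Integrable h μ → h =ᵐ[μ] 0 → 𝒢 h =ᵐ[μ] 0 := by
    intro h hint h0
    have h1 : eLpNorm h 1 μ = 0 := by
      rw [eLpNorm_congr_ae h0]; exact eLpNorm_zero
    have h2 := (hreg h hint).2
    rw [h1, mul_zero, nonpos_iff_eq_zero] at h2
    exact (eLpNorm_eq_zero_iff (hreg h hint).1.aestronglyMeasurable hofq0).mp h2
  -- the fixed point equation for the difference
  have hEq : w =ᵐ[μ] fun x => -𝒢 g' x := by
    set d : EuclideanSpace ℝ (Fin n) → ℝ := fun x => V x * u₂ x - V x * u₁ x with hddef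
    have e1 : (fun x => f x - V x * u₁ x)
        = (fun x => f x - V x * u₂ x) + d := by
      funext x; simp only [hddef, Pi.add_apply]; ring
    have e2 : 𝒢 (fun x => f x - V x * u₁ x)
        = 𝒢 (fun x => f x - V x * u₂ x) + 𝒢 d := by rw [e1, hadd]
    have hwd : w =ᵐ[μ] fun x => 𝒢 d x := by
      filter_upwards [heq1, heq2] with x h1 h2
      have := congrFun e2 x
      simp only [Pi.add_apply] at this
      simp only [hwdef]
      rw [h1, h2, this]; ring
    have e3 : d = (-g') + (d + g') := by funext x; simp only [Pi.add_apply, Pi.neg_apply]; ring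
    have e4 : 𝒢 d = 𝒢 (-g') + 𝒢 (d + g') := by rw [← hadd, ← e3]
    have e5 : 𝒢 (-g') = -𝒢 g' := by
      have h1 : (-1:ℝ) • g' = -g' := by funext x; simp
      have := hsmul (-1) g'
      rw [h1] at this
      rw [this]; funext x; simp
    have hz : (d + g') =ᵐ[μ] 0 := by
      filter_upwards [hg'ae] with x hx
      simp only [Pi.add_apply, hddef, ← hx, Pi.zero_apply]
      ring
    have hzint : Integrable (d + g') μ := (hVu2.sub hVu1).add hg'int
    have h𝒢z := hkill _ hzint hz
    filter_upwards [hwd, h𝒢z] with x h1 h2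
    have := congrFun e4 x
    simp only [Pi.add_apply] at this
    rw [h1, this, h2, e5]
    simp
  -- basic quantities
  set G : ℝ≥0∞ := ∫⁻ x, (‖g' x‖₊ : ℝ≥0∞) ∂μ with hGdef
  have hGfin : G ≠ ∞ := hg'int.2.ne
  have hwfin : (∫⁻ x, (‖w' x‖₊ : ℝ≥0∞) ∂μ) ≠ ∞ := hw'int.2.ne
  -- finiteness of Phi
  have hPhiFin : ∀ t : ℝ, 0 ≤ t → Phi μ V w' t ≠ ∞ := by
    intro t ht
    have hb : ∀ x, ({y | |w' y| ≤ t}.indicator fun y => ENNReal.ofReal (V y * w' y ^ 2)) x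
        ≤ ENNReal.ofReal (M * t) * (‖w' x‖₊ : ℝ≥0∞) := by
      intro x
      by_cases hx : x ∈ {y | |w' y| ≤ t}
      · rw [Set.indicator_of_mem hx]
        have hx' : |w' x| ≤ t := hx
        rw [← ofReal_norm_eq_coe_nnnorm, Real.norm_eq_abs,
          ← ENNReal.ofReal_mul (by positivity)]
        apply ENNReal.ofReal_le_ofReal
        calc V x * w' x ^ 2 = (V x * |w' x|) * |w' x| := by rw [← sq_abs]; ring
          _ ≤ (M * t) * |w' x| :=
            mul_le_mul_of_nonneg_right (mul_le_mul (hM x) hx' (abs_nonneg _) hM0)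
              (abs_nonneg _)
      · rw [Set.indicator_of_notMem hx]
        exact zero_le
    have : Phi μ V w' t ≤ ENNReal.ofReal (M * t) * ∫⁻ x, (‖w' x‖₊ : ℝ≥0∞) ∂μ := by
      rw [Phi, ← lintegral_const_mul _ (by fun_prop)]
      exact lintegral_mono hb
    exact (this.trans_lt (ENNReal.mul_lt_top ENNReal.ofReal_ne_top.lt_top hwfin.lt_top)).ne
  -- the key inequality
  have key : ∀ t : ℝ, 1 ≤ t → Phi μ V w' t ≤
      (ENNReal.ofReal (M * t)) ^ (1/q) * G ^ (1/q') *
        (ENNReal.ofReal C * Psi μ V w' t) := by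
    intro t ht
    have ht0 : (0:ℝ) < t := one_pos.trans_le ht
    set S : Set (EuclideanSpace ℝ (Fin n)) := {y | |w' y| ≤ t} with hSdef
    have hSmeas : MeasurableSet S := measurableSet_le hw'meas.abs measurable_const
    set ft : EuclideanSpace ℝ (Fin n) → ℝ := S.indicator g' with hftdef
    set rt : EuclideanSpace ℝ (Fin n) → ℝ := Sᶜ.indicator g' with hrtdef
    have hsum : ft + rt = g' := by
      funext x; by_cases hx : x ∈ S
      · simp [hftdef, hrtdef, Set.indicator_of_mem hx,
          Set.indicator_of_notMem (by simp [hx] : x ∉ Sᶜ)]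
      · simp [hftdef, hrtdef, Set.indicator_of_notMem hx,
          Set.indicator_of_mem (by simp [hx] : x ∈ Sᶜ)]
    have hftmeas : Measurable ft := hg'meas.indicator hSmeas
    have hftbd : ∀ x, ‖ft x‖ ≤ M * t := by
      intro x
      by_cases hx : x ∈ S
      · rw [hftdef]
        rw [Set.indicator_of_mem hx]
        have hx' : |w' x| ≤ t := hx
        rw [Real.norm_eq_abs, hg'def, abs_mul, abs_of_nonneg (hV0 x)]
        exact mul_le_mul (hM x) hx' (abs_nonneg _) hM0
      · rw [hftdef, Set.indicator_of_notMem hx]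
        simp; positivity
    have hftL2 : MemLp ft 2 μ :=
      MemLp.of_bound hftmeas.aestronglyMeasurable (M*t) (Filter.Eventually.of_forall hftbd)
    have hrtint : Integrable rt μ := hg'int.indicator hSmeas.compl
    obtain ⟨hGrt_mem, hGrt_bd⟩ := hreg rt hrtint
    have hq1' : (1:ℝ≥0∞) ≤ ENNReal.ofReal q := by
      rw [← ENNReal.ofReal_one]; exact ENNReal.ofReal_le_ofReal hq1.le
    have hGrtint : Integrable (𝒢 rt) μ :=
      memLp_one_iff_integrable.mp (hGrt_mem.mono_exponent hq1')
    have hGft : 𝒢 ft =ᵐ[μ] fun x => -w x - 𝒢 rt x := by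
      have h0 : 𝒢 g' = 𝒢 ft + 𝒢 rt := by rw [← hsum, hadd]
      filter_upwards [hEq] with x hx
      have := congrFun h0 x
      simp only [Pi.add_apply] at this
      -- hx : w x = -𝒢 g' x
      have : 𝒢 ft x = 𝒢 g' x - 𝒢 rt x := by rw [this]; ring
      rw [this]
      have : 𝒢 g' x = -w x := by rw [hx]; ring
      rw [this]
    have hftw : Integrable (fun x => ft x * w x) μ :=
      hw.bdd_mul hftmeas.aestronglyMeasurable (ae_of_all _ hftbd)
    have hftGrt : Integrable (fun x => ft x * 𝒢 rt x) μ :=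
      hGrtint.bdd_mul hftmeas.aestronglyMeasurable (ae_of_all _ hftbd)
    have hpos := hcoerc ft hftL2
    have hcongr : (fun x => ft x * 𝒢 ft x) =ᵐ[μ] fun x => -(ft x * w x) - ft x * 𝒢 rt x := by
      filter_upwards [hGft] with x hx
      rw [hx]; ring
    rw [integral_congr_ae hcongr] at hpos
    have hsplit : ∫ x, (-(ft x * w x) - ft x * 𝒢 rt x) ∂μ
        = -∫ x, ft x * w x ∂μ - ∫ x, ft x * 𝒢 rt x ∂μ := by
      have hrw : (fun x => -(ft x * w x) - ft x * 𝒢 rt x)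
          = fun x => -((ft x * w x) + ft x * 𝒢 rt x) := by
        funext x; ring
      rw [hrw, integral_neg, integral_add hftw hftGrt]
      ring
    rw [hsplit] at hpos
    have hmain : ∫ x, ft x * w x ∂μ ≤ |∫ x, ft x * 𝒢 rt x ∂μ| := by
      have := neg_le_abs (∫ x, ft x * 𝒢 rt x ∂μ)
      linarith
    -- identify the LHS with Phi
    have hftw_eq : (fun x => ft x * w x) =ᵐ[μ]
        S.indicator (fun y => V y * w' y ^ 2) := by
      filter_upwards [hww'] with x hx
      by_cases hxS : x ∈ S
      · rw [Set.indicator_of_mem hxS, hftdef, Set.indicator_of_mem hxS, hg'def, hx]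
        ring
      · rw [Set.indicator_of_notMem hxS, hftdef, Set.indicator_of_notMem hxS, zero_mul]
    have hPhi_eq : ∫ x, ft x * w x ∂μ = (Phi μ V w' t).toReal := by
      rw [integral_congr_ae hftw_eq,
        integral_eq_lintegral_of_nonneg_ae ?_ ?_]
      · congr 1
        rw [Phi]
        apply lintegral_congr
        intro x
        by_cases hxS : x ∈ S
        · rw [Set.indicator_of_mem hxS, Set.indicator_of_mem hxS]
        · rw [Set.indicator_of_notMem hxS, Set.indicator_of_notMem hxS,
            ENNReal.ofReal_zero]
      · filter_upwards with x
        by_cases hxS : x ∈ S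
        · rw [Pi.zero_apply, Set.indicator_of_mem hxS]
          exact mul_nonneg (hV0 x) (sq_nonneg _)
        · rw [Pi.zero_apply, Set.indicator_of_notMem hxS]
      · exact ((hVmeas.mul (hw'meas.pow_const 2)).indicator hSmeas).aestronglyMeasurable
    -- bound the RHS
    have habs : |∫ x, ft x * 𝒢 rt x ∂μ|
        ≤ (∫⁻ x, (‖ft x‖₊ : ℝ≥0∞) * (‖𝒢 rt x‖₊ : ℝ≥0∞) ∂μ).toReal := by
      rw [← Real.norm_eq_abs]
      refine le_trans (norm_integral_le_lintegral_norm _) ?_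
      apply le_of_eq
      congr 1
      apply lintegral_congr
      intro x
      rw [ofReal_norm_eq_coe_nnnorm, nnnorm_mul, ENNReal.coe_mul]
    have hHold : ∫⁻ x, (‖ft x‖₊ : ℝ≥0∞) * (‖𝒢 rt x‖₊ : ℝ≥0∞) ∂μ ≤
        (∫⁻ x, (‖ft x‖₊ : ℝ≥0∞) ^ q' ∂μ) ^ (1/q') *
        (∫⁻ x, (‖𝒢 rt x‖₊ : ℝ≥0∞) ^ q ∂μ) ^ (1/q) := by
      have := ENNReal.lintegral_mul_le_Lp_mul_Lq μ hconj
        (f := fun x => (‖ft x‖₊ : ℝ≥0∞)) (g := fun x => (‖𝒢 rt x‖₊ : ℝ≥0∞))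
        (by fun_prop) hGrt_mem.aestronglyMeasurable.aemeasurable.enorm
      simpa using this
    have hsnorm2 : (∫⁻ x, (‖𝒢 rt x‖₊ : ℝ≥0∞) ^ q ∂μ) ^ (1/q)
        ≤ ENNReal.ofReal C * Psi μ V w' t := by
      have e : (∫⁻ x, (‖𝒢 rt x‖₊ : ℝ≥0∞) ^ q ∂μ) ^ (1/q)
          = eLpNorm (𝒢 rt) (ENNReal.ofReal q) μ := by
        rw [eLpNorm_eq_lintegral_rpow_enorm_toReal hofq0 ENNReal.ofReal_ne_top,
          ENNReal.toReal_ofReal hq0.le]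
        rfl
      rw [e]
      refine le_trans hGrt_bd ?_
      apply mul_le_mul_right
      rw [eLpNorm_one_eq_lintegral_enorm]
      apply le_of_eq
      rw [Psi]
      apply lintegral_congr
      intro x
      by_cases hx : x ∈ Sᶜ
      · have hx' : t < |w' x| := by
          simpa [hSdef, not_le] using hx
        rw [Set.indicator_of_mem (by exact hx' : x ∈ {y | t < |w' y|}),
          hrtdef, Set.indicator_of_mem hx, ← ofReal_norm,
          Real.norm_eq_abs, hg'def, abs_mul, abs_of_nonneg (hV0 x)]
      · have hx' : ¬ (t < |w' x|) := by
          simpa [hSdef, not_le] using hx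
        rw [Set.indicator_of_notMem (by exact hx' : x ∉ {y | t < |w' y|}),
          hrtdef, Set.indicator_of_notMem hx]
        simp
    have hF1 : (∫⁻ x, (‖ft x‖₊ : ℝ≥0∞) ^ q' ∂μ) ^ (1/q')
        ≤ (ENNReal.ofReal (M*t)) ^ (1/q) * G ^ (1/q') := by
      have hq'1le : (0:ℝ) ≤ q' - 1 := by linarith
      have hptf : ∀ x, (‖ft x‖₊ : ℝ≥0∞) ^ q'
          ≤ (ENNReal.ofReal (M*t)) ^ (q'-1) * (‖ft x‖₊ : ℝ≥0∞) := by
        intro x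
        have hb : (‖ft x‖₊ : ℝ≥0∞) ≤ ENNReal.ofReal (M*t) := by
          rw [← ofReal_norm_eq_coe_nnnorm]
          exact ENNReal.ofReal_le_ofReal (hftbd x)
        calc (‖ft x‖₊ : ℝ≥0∞) ^ q'
            = (‖ft x‖₊ : ℝ≥0∞) ^ (q'-1) * ((‖ft x‖₊ : ℝ≥0∞)) ^ (1:ℝ) := by
              rw [← ENNReal.rpow_add_of_nonneg _ _ hq'1le zero_le_one]
              norm_num
          _ ≤ (ENNReal.ofReal (M*t)) ^ (q'-1) * (‖ft x‖₊ : ℝ≥0∞) := by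
              rw [ENNReal.rpow_one]
              exact mul_le_mul' (ENNReal.rpow_le_rpow hb hq'1le) le_rfl
      have hint1 : ∫⁻ x, (‖ft x‖₊ : ℝ≥0∞) ^ q' ∂μ
          ≤ (ENNReal.ofReal (M*t)) ^ (q'-1) * G := by
        calc ∫⁻ x, (‖ft x‖₊ : ℝ≥0∞) ^ q' ∂μ
            ≤ ∫⁻ x, (ENNReal.ofReal (M*t)) ^ (q'-1) * (‖ft x‖₊ : ℝ≥0∞) ∂μ :=
              lintegral_mono hptf
          _ = (ENNReal.ofReal (M*t)) ^ (q'-1) * ∫⁻ x, (‖ft x‖₊ : ℝ≥0∞) ∂μ := by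
              rw [lintegral_const_mul _ (by fun_prop)]
          _ ≤ (ENNReal.ofReal (M*t)) ^ (q'-1) * G := by
              apply mul_le_mul_right
              rw [hGdef]
              apply lintegral_mono
              intro x
              simp only [hftdef]
              by_cases hx : x ∈ S
              · simp [Set.indicator_of_mem hx]
              · simp [Set.indicator_of_notMem hx]
      have hexp : (q'-1) * (1/q') = 1/q := by
        have hq'0 : q' ≠ 0 := by linarith
        have hqm1 : q - 1 ≠ 0 := by linarith
        rw [hq'def]
        field_simp
        ring
      calc (∫⁻ x, (‖ft x‖₊ : ℝ≥0∞) ^ q' ∂μ) ^ (1/q')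
          ≤ ((ENNReal.ofReal (M*t)) ^ (q'-1) * G) ^ (1/q') :=
            ENNReal.rpow_le_rpow hint1 (by positivity)
        _ = (ENNReal.ofReal (M*t)) ^ (1/q) * G ^ (1/q') := by
            rw [ENNReal.mul_rpow_of_nonneg _ _ (by positivity),
              ← ENNReal.rpow_mul, hexp]
    -- assemble
    set B : ℝ≥0∞ := (ENNReal.ofReal (M * t)) ^ (1/q) * G ^ (1/q') *
        (ENNReal.ofReal C * Psi μ V w' t) with hBdef
    have hPsiG : Psi μ V w' t ≤ G := by
      rw [Psi, hGdef]
      apply lintegral_mono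
      intro x
      by_cases hx : x ∈ {y | t < |w' y|}
      · rw [Set.indicator_of_mem hx]
        show ENNReal.ofReal (V x * |w' x|) ≤ (‖g' x‖₊ : ℝ≥0∞)
        rw [← ofReal_norm_eq_coe_nnnorm, Real.norm_eq_abs]
        apply ENNReal.ofReal_le_ofReal
        apply le_of_eq
        simp only [hg'def]
        rw [abs_mul, abs_of_nonneg (hV0 x)]
      · rw [Set.indicator_of_notMem hx]
        exact zero_le
    have hBfin : B ≠ ∞ := by
      rw [hBdef]
      apply ENNReal.mul_ne_top
      apply ENNReal.mul_ne_top
      · exact ENNReal.rpow_ne_top_of_nonneg (by positivity) ENNReal.ofReal_ne_top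
      · exact ENNReal.rpow_ne_top_of_nonneg (by positivity) hGfin
      · exact ENNReal.mul_ne_top ENNReal.ofReal_ne_top
          (hPsiG.trans_lt hGfin.lt_top).ne
    have hIB : (∫⁻ x, (‖ft x‖₊ : ℝ≥0∞) * (‖𝒢 rt x‖₊ : ℝ≥0∞) ∂μ) ≤ B :=
      hHold.trans (mul_le_mul' hF1 hsnorm2)
    have h1 : (Phi μ V w' t).toReal ≤ B.toReal := by
      rw [← hPhi_eq]
      exact hmain.trans (habs.trans (ENNReal.toReal_mono hBfin hIB))
    rw [← ENNReal.ofReal_toReal (hPhiFin t ht0.le), ← ENNReal.ofReal_toReal hBfin]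
    exact ENNReal.ofReal_le_ofReal h1
  -- restated key inequality
  set D : ℝ≥0∞ := (ENNReal.ofReal M) ^ (1/q) * G ^ (1/q') * ENNReal.ofReal C with hDdef
  have hDfin : D ≠ ∞ := by
    rw [hDdef]
    apply ENNReal.mul_ne_top
    apply ENNReal.mul_ne_top
    · exact ENNReal.rpow_ne_top_of_nonneg (by positivity) ENNReal.ofReal_ne_top
    · exact ENNReal.rpow_ne_top_of_nonneg (by positivity) hGfin
    · exact ENNReal.ofReal_ne_top
  have key2 : ∀ t : ℝ, 1 ≤ t → Phi μ V w' t ≤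
      D * (ENNReal.ofReal t) ^ (1/q) * Psi μ V w' t := by
    intro t ht
    refine (key t ht).trans (le_of_eq ?_)
    have ht0 : (0:ℝ) < t := one_pos.trans_le ht
    rw [hDdef, ENNReal.ofReal_mul hM0,
      ENNReal.mul_rpow_of_nonneg _ _ (by positivity)]
    ring
  have hPsiG : ∀ t : ℝ, Psi μ V w' t ≤ G := by
    intro t
    rw [Psi, hGdef]
    apply lintegral_mono
    intro x
    by_cases hx : x ∈ {y | t < |w' y|}
    · rw [Set.indicator_of_mem hx]
      show ENNReal.ofReal (V x * |w' x|) ≤ (‖g' x‖₊ : ℝ≥0∞)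
      rw [← ofReal_norm_eq_coe_nnnorm, Real.norm_eq_abs]
      apply ENNReal.ofReal_le_ofReal
      apply le_of_eq
      simp only [hg'def]
      rw [abs_mul, abs_of_nonneg (hV0 x)]
    · rw [Set.indicator_of_notMem hx]
      exact zero_le
  -- iteration
  have hinvq1 : 1/q < 1 := by
    rw [div_lt_one hq0]; exact hq1
  have hdelta : 0 < 1 - 1/q := by linarith
  have main : ∀ m : ℕ, ∃ A : ℝ≥0∞, A ≠ ∞ ∧ ∀ t : ℝ, 1 ≤ t →
      Phi μ V w' t ≤ A * (ENNReal.ofReal t) ^ (1/q - m * (1 - 1/q)) := by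
    intro m
    induction m with
    | zero =>
      refine ⟨D * G, ENNReal.mul_ne_top hDfin hGfin, fun t ht => ?_⟩
      have h2 : ((0:ℕ):ℝ) * (1 - 1/q) = 0 := by norm_num
      rw [h2, sub_zero]
      calc Phi μ V w' t ≤ D * (ENNReal.ofReal t) ^ (1/q) * Psi μ V w' t := key2 t ht
        _ ≤ D * (ENNReal.ofReal t) ^ (1/q) * G := mul_le_mul_right (hPsiG t) _
        _ = D * G * (ENNReal.ofReal t) ^ (1/q) := by ring
    | succ m ih =>
      obtain ⟨A, hA, hbd⟩ := ih
      set β : ℝ := 1/q - m * (1 - 1/q) with hβdef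
      have hβ1 : β < 1 := by
        have : (0:ℝ) ≤ m * (1 - 1/q) := by positivity
        rw [hβdef]; linarith
      have hPsi := psi_le μ V w' hVmeas hw'meas hV0 hβ1 hbd
      have hr1 : (2:ℝ≥0∞) ^ (β - 1) < 1 := by
        calc (2:ℝ≥0∞) ^ (β - 1) < (2:ℝ≥0∞) ^ (0:ℝ) :=
          ENNReal.rpow_lt_rpow_of_exponent_lt (by norm_num) (by norm_num) (by linarith)
        _ = 1 := by simp
      have hcfin : ((2:ℝ≥0∞) ^ β * (1 - (2:ℝ≥0∞) ^ (β - 1))⁻¹) ≠ ∞ := by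
        apply ENNReal.mul_ne_top
        · simp [ENNReal.rpow_eq_top_iff]
        · rw [Ne, ENNReal.inv_eq_top]
          intro h0
          rw [tsub_eq_zero_iff_le] at h0
          exact absurd h0 (not_le.mpr hr1)
      refine ⟨D * (A * ((2:ℝ≥0∞) ^ β * (1 - (2:ℝ≥0∞) ^ (β - 1))⁻¹)), ?_, fun t ht => ?_⟩
      · exact ENNReal.mul_ne_top hDfin (ENNReal.mul_ne_top hA hcfin)
      · have ht0 : (0:ℝ) < t := one_pos.trans_le ht
        have hT0 : (ENNReal.ofReal t) ≠ 0 := by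
          rw [Ne, ENNReal.ofReal_eq_zero, not_le]; exact ht0
        have hTtop : (ENNReal.ofReal t) ≠ ∞ := ENNReal.ofReal_ne_top
        have hexp : 1/q + (β - 1) = 1/q - (((m:ℕ)+1):ℝ) * (1 - 1/q) := by
          rw [hβdef]; push_cast; ring
        calc Phi μ V w' t ≤ D * (ENNReal.ofReal t) ^ (1/q) * Psi μ V w' t := key2 t ht
          _ ≤ D * (ENNReal.ofReal t) ^ (1/q) *
              (A * ((2:ℝ≥0∞) ^ β * (1 - (2:ℝ≥0∞) ^ (β - 1))⁻¹) *
                (ENNReal.ofReal t) ^ (β - 1)) := mul_le_mul_right (hPsi t ht) _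
          _ = D * (A * ((2:ℝ≥0∞) ^ β * (1 - (2:ℝ≥0∞) ^ (β - 1))⁻¹)) *
              ((ENNReal.ofReal t) ^ (1/q) * (ENNReal.ofReal t) ^ (β - 1)) := by ring
          _ = D * (A * ((2:ℝ≥0∞) ^ β * (1 - (2:ℝ≥0∞) ^ (β - 1))⁻¹)) *
              (ENNReal.ofReal t) ^ (1/q - (((m:ℕ)+1):ℝ) * (1 - 1/q)) := by
              rw [← ENNReal.rpow_add _ _ hT0 hTtop, hexp]
          _ = D * (A * ((2:ℝ≥0∞) ^ β * (1 - (2:ℝ≥0∞) ^ (β - 1))⁻¹)) *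
              (ENNReal.ofReal t) ^ (1/q - ((m+1 : ℕ):ℝ) * (1 - 1/q)) := by push_cast; ring_nf
  -- choose a negative exponent
  obtain ⟨m, hm⟩ := exists_nat_gt ((1/q) / (1 - 1/q))
  obtain ⟨A, hA, hbd⟩ := main m
  set β : ℝ := 1/q - m * (1 - 1/q) with hβdef
  have hβneg : β < 0 := by
    have h1 : (1/q) / (1 - 1/q) * (1 - 1/q) < m * (1 - 1/q) :=
      mul_lt_mul_of_pos_right hm hdelta
    rw [div_mul_cancel₀ _ (ne_of_gt hdelta)] at h1
    rw [hβdef]; linarith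
  -- all Phi vanish
  have hPhiz : ∀ s : ℝ, 0 ≤ s → Phi μ V w' s = 0 := by
    intro s hs
    by_contra hne
    have hfin := hPhiFin s hs
    have hpos : 0 < (Phi μ V w' s).toReal := ENNReal.toReal_pos hne hfin
    have htend : Tendsto (fun t : ℝ => A.toReal * t ^ β) atTop (nhds 0) := by
      have h0 := tendsto_rpow_neg_atTop (y := -β) (by linarith)
      simp only [neg_neg] at h0
      have := h0.const_mul A.toReal
      simpa using this
    have hev := htend.eventually_lt_const hpos
    obtain ⟨t, ht⟩ := (hev.and (eventually_ge_atTop (max 1 s))).exists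
    obtain ⟨hsmall, htb⟩ := ht
    have h1t : (1:ℝ) ≤ t := le_trans (le_max_left _ _) htb
    have hst : s ≤ t := le_trans (le_max_right _ _) htb
    have hmono : Phi μ V w' s ≤ Phi μ V w' t := by
      rw [Phi, Phi]
      apply lintegral_mono
      intro x
      apply Set.indicator_le_indicator_of_subset
      · intro y hy; exact le_trans hy hst
      · intro y; exact zero_le
    have hPt : Phi μ V w' t ≤ ENNReal.ofReal (A.toReal * t ^ β) := by
      rw [ENNReal.ofReal_mul ENNReal.toReal_nonneg, ENNReal.ofReal_toReal hA,
        ← ENNReal.ofReal_rpow_of_pos (by linarith : (0:ℝ) < t)]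
      exact hbd t h1t
    have : Phi μ V w' s < Phi μ V w' s := by
      calc Phi μ V w' s ≤ Phi μ V w' t := hmono
        _ ≤ ENNReal.ofReal (A.toReal * t ^ β) := hPt
        _ < ENNReal.ofReal ((Phi μ V w' s).toReal) :=
            (ENNReal.ofReal_lt_ofReal_iff hpos).mpr hsmall
        _ = Phi μ V w' s := ENNReal.ofReal_toReal hfin
    exact lt_irrefl _ this
  -- total vanishing
  have htot : ∫⁻ x, ENNReal.ofReal (V x * w' x ^ 2) ∂μ = 0 := by
    have hmonot : Monotone (fun m : ℕ => fun x =>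
        ({y | |w' y| ≤ (m:ℝ)}.indicator fun y => ENNReal.ofReal (V y * w' y ^ 2)) x) := by
      intro a b hab
      intro x
      apply Set.indicator_le_indicator_of_subset
      · intro y hy
        have h1 : |w' y| ≤ (a:ℝ) := hy
        exact le_trans h1 (Nat.cast_le.mpr hab)
      · intro y; exact zero_le
    have hsupeq : ∀ x, (⨆ m : ℕ, ({y | |w' y| ≤ (m:ℝ)}.indicator
        (fun y => ENNReal.ofReal (V y * w' y ^ 2)) x)) = ENNReal.ofReal (V x * w' x ^ 2) := by
      intro x
      apply le_antisymm
      · apply iSup_le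
        intro m
        by_cases hx : x ∈ {y | |w' y| ≤ (m:ℝ)}
        · rw [Set.indicator_of_mem hx]
        · rw [Set.indicator_of_notMem hx]; exact zero_le
      · obtain ⟨m, hm'⟩ := exists_nat_ge (|w' x|)
        refine le_iSup_of_le m (le_of_eq ?_)
        rw [Set.indicator_of_mem (by exact hm' : x ∈ {y | |w' y| ≤ (m:ℝ)})]
    calc ∫⁻ x, ENNReal.ofReal (V x * w' x ^ 2) ∂μ
        = ∫⁻ x, ⨆ m : ℕ, ({y | |w' y| ≤ (m:ℝ)}.indicator
          (fun y => ENNReal.ofReal (V y * w' y ^ 2)) x) ∂μ := by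
          apply lintegral_congr
          intro x
          exact (hsupeq x).symm
      _ = ⨆ m : ℕ, ∫⁻ x, ({y | |w' y| ≤ (m:ℝ)}.indicator
          (fun y => ENNReal.ofReal (V y * w' y ^ 2)) x) ∂μ := by
          apply lintegral_iSup
          · intro m
            exact Measurable.indicator (by fun_prop)
              (measurableSet_le hw'meas.abs measurable_const)
          · exact hmonot
      _ = ⨆ m : ℕ, Phi μ V w' m := by rfl
      _ = 0 := by
          simp only [ENNReal.iSup_eq_zero]
          intro m
          exact hPhiz m (Nat.cast_nonneg m)
  have hae : ∀ᵐ x ∂μ, V x * w' x ^ 2 = 0 := by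
    have h0 := (lintegral_eq_zero_iff (by fun_prop : Measurable fun x =>
      ENNReal.ofReal (V x * w' x ^ 2))).mp htot
    filter_upwards [h0] with x hx
    simp only [Pi.zero_apply, ENNReal.ofReal_eq_zero] at hx
    have h1 : 0 ≤ V x * w' x ^ 2 := mul_nonneg (hV0 x) (sq_nonneg _)
    linarith
  have hg'0 : g' =ᵐ[μ] 0 := by
    filter_upwards [hae] with x hx
    rcases mul_eq_zero.mp hx with h | h
    · simp [hg'def, h]
    · have : w' x = 0 := by
        have := sq_eq_zero_iff.mp h
        exact this
      simp [hg'def, this]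
  have h𝒢g'0 := hkill g' hg'int hg'0
  have hw0 : w =ᵐ[μ] 0 := by
    filter_upwards [hEq, h𝒢g'0] with x h1 h2
    rw [h1, h2]
    simp
  filter_upwards [hw0] with x hx
  have : u₁ x - u₂ x = 0 := hx
  linarith
end
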